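/- Let H be a nontrivial complex Hilbert space, let A be a densely defined self-adjoint operator on H, and let B be a bounded self-adjoint operator defined on all of H. Then A and B cannot satisfy the Heisenberg Commutation Relation on a core for A: there is no submodule K of H contained in dom A that is a core for A (the closure of the restriction of A to K equals A) such that for every k ∈ K, B k ∈ dom A and A(B k) − B(A k) = i·k. -/

import Mathlib

open Complex LinearPMap

local notation "⟪" x ", " y "⟫" => @inner ℂ _ _ x y

section Aux

variable {H : Type*} [NormedAddCommGroup H] [InnerProductSpace ℂ H] [CompleteSpace H]

/-- Transport along an equality of `LinearPMap`s. -/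
theorem pmap_congr {f g : H →ₗ.[ℂ] H} (h : f = g) {y : H} (hy : y ∈ f.domain) :
    ∃ hy' : y ∈ g.domain, g ⟨y, hy'⟩ = f ⟨y, hy⟩ := by
  subst h; exact ⟨hy, rfl⟩

variable {A : H →ₗ.[ℂ] H} (hAdense : Dense (A.domain : Set H)) (hAsa : A.adjoint = A)

include hAdense hAsa

/-- Symmetry of a self-adjoint operator. -/
theorem heis_symm (x y : A.domain) : ⟪A x, (y : H)⟫ = ⟪(x : H), A y⟫ := by
  have h := LinearPMap.adjoint_isFormalAdjoint hAdense (T := A)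
  rw [hAsa] at h
  exact h x y

/-- A vector with a formal adjoint value belongs to the domain. -/
theorem heis_mem_domain (y w : H) (h : ∀ x : A.domain, ⟪w, (x : H)⟫ = ⟪y, A x⟫) :
    ∃ hy : y ∈ A.domain, A ⟨y, hy⟩ = w := by
  have hy : y ∈ A.adjoint.domain := mem_adjoint_domain_of_exists _ ⟨w, h⟩
  have hval : A.adjoint ⟨y, hy⟩ = w := adjoint_apply_eq hAdense _ h
  obtain ⟨hy', hval'⟩ := pmap_congr hAsa hy
  exact ⟨hy', hval'.trans hval⟩

/-- A self-adjoint operator is closed. -/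
theorem heis_isClosed : A.IsClosed := by
  show _root_.IsClosed (A.graph : Set (H × H))
  apply IsSeqClosed.isClosed
  intro g p hg hgp
  have h1 : Filter.Tendsto (fun n => (g n).1) Filter.atTop (nhds p.1) :=
    (continuous_fst.tendsto p).comp hgp
  have h2 : Filter.Tendsto (fun n => (g n).2) Filter.atTop (nhds p.2) :=
    (continuous_snd.tendsto p).comp hgp
  choose u hu1 hu2 using fun n => A.mem_graph_iff.mp (hg n)
  have key : ∀ x : A.domain, ⟪p.2, (x : H)⟫ = ⟪p.1, A x⟫ := by
    intro x
    have t1 : Filter.Tendsto (fun n => ⟪(g n).2, (x : H)⟫) Filter.atTop (nhds ⟪p.2, (x : H)⟫) :=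
      h2.inner tendsto_const_nhds
    have t2 : Filter.Tendsto (fun n => ⟪(g n).2, (x : H)⟫) Filter.atTop (nhds ⟪p.1, A x⟫) := by
      have he : (fun n => ⟪(g n).2, (x : H)⟫) = fun n => ⟪((u n : H)), A x⟫ := by
        funext n
        rw [← hu2 n, heis_symm hAdense hAsa (u n) x]
      rw [he]
      have h1' : Filter.Tendsto (fun n => ((u n : H))) Filter.atTop (nhds p.1) := by
        simpa only [hu1] using h1
      exact h1'.inner tendsto_const_nhds
    exact tendsto_nhds_unique t1 t2
  obtain ⟨hp1, hval⟩ := heis_mem_domain hAdense hAsa p.1 p.2 key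
  exact A.mem_graph_iff.mpr ⟨⟨p.1, hp1⟩, rfl, hval⟩

/-- `⟪A x, x⟫` is real. -/
theorem heis_inner_real (x : A.domain) : (⟪A x, (x : H)⟫).im = 0 := by
  rw [← Complex.conj_eq_iff_im, inner_conj_symm]
  exact (heis_symm hAdense hAsa x x).symm

/-- Norm identity for `A x + c • x` with `c` purely imaginary. -/
theorem heis_norm_sq (x : A.domain) {c : ℂ} (hc : c.re = 0) :
    ‖A x + c • (x : H)‖ ^ 2 = ‖A x‖ ^ 2 + ‖c‖ ^ 2 * ‖(x : H)‖ ^ 2 := by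
  have hre : RCLike.re ⟪A x, c • (x : H)⟫ = 0 := by
    rw [inner_smul_right]
    have him := heis_inner_real hAdense hAsa x
    simp only [RCLike.re_to_complex, Complex.mul_re, hc, him, zero_mul, mul_zero, sub_zero]
  rw [@norm_add_sq ℂ, hre, norm_smul, mul_pow]
  ring

/-- Existence of the resolvent at `±i`. -/
theorem heis_resolvent {c : ℂ} (hc : c.re = 0) (hc1 : ‖c‖ = 1) :
    ∃ R : H →L[ℂ] H, (∀ y, ∃ h : R y ∈ A.domain, A ⟨R y, h⟩ + c • R y = y) ∧
      ∀ x : A.domain, R (A x + c • (x : H)) = x := by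
  have hcim : c.im ≠ 0 := by
    intro h
    have hc0 : c = 0 := Complex.ext hc h
    rw [hc0, norm_zero] at hc1
    norm_num at hc1
  set T : A.domain →ₗ[ℂ] H := A.toFun + c • A.domain.subtype with hT
  have hTapp : ∀ x : A.domain, T x = A x + c • (x : H) := fun x => rfl
  have hTnorm : ∀ x : A.domain, ‖T x‖ ^ 2 = ‖A x‖ ^ 2 + ‖(x : H)‖ ^ 2 := by
    intro x
    rw [hTapp, heis_norm_sq hAdense hAsa x hc, hc1]
    ring
  have hTle : ∀ x : A.domain, ‖(x : H)‖ ≤ ‖T x‖ := by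
    intro x
    have h2 : ‖(x : H)‖ ^ 2 ≤ ‖T x‖ ^ 2 := by
      rw [hTnorm x]; exact le_add_of_nonneg_left (by positivity)
    exact (abs_le_of_sq_le_sq' h2 (norm_nonneg _)).2
  have hinj : Function.Injective T := by
    intro x y hxy
    have h0 : T (x - y) = 0 := by rw [LinearMap.map_sub, hxy, sub_self]
    have h1 : ‖((x - y : A.domain) : H)‖ ≤ 0 := by
      calc ‖((x - y : A.domain) : H)‖ ≤ ‖T (x - y)‖ := hTle _
      _ = 0 := by rw [h0, norm_zero]
    have h2 : ((x : H)) - ((y : H)) = 0 := by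
      have := le_antisymm h1 (norm_nonneg _)
      rwa [norm_eq_zero, Submodule.coe_sub] at this
    exact Subtype.ext (sub_eq_zero.mp h2)
  have hrange : LinearMap.range T = ⊤ := by
    have hclosed : IsClosed ((LinearMap.range T : Submodule ℂ H) : Set H) := by
      apply IsSeqClosed.isClosed
      intro g y hg hgy
      choose x hx using fun n => hg n
      have hcg : CauchySeq g := hgy.cauchySeq
      have hcx : CauchySeq (fun n => ((x n : H))) := by
        rw [Metric.cauchySeq_iff] at hcg ⊢
        intro ε hε
        obtain ⟨N, hN⟩ := hcg ε hε
        refine ⟨N, fun m hm n hn => ?_⟩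
        have := hN m hm n hn
        rw [dist_eq_norm] at this ⊢
        refine lt_of_le_of_lt ?_ this
        calc ‖((x m : H)) - ((x n : H))‖ = ‖((x m - x n : A.domain) : H)‖ := by
              rw [Submodule.coe_sub]
        _ ≤ ‖T (x m - x n)‖ := hTle _
        _ = ‖g m - g n‖ := by rw [LinearMap.map_sub, hx m, hx n]
      have hcAx : CauchySeq (fun n => A (x n)) := by
        rw [Metric.cauchySeq_iff] at hcg ⊢
        intro ε hε
        obtain ⟨N, hN⟩ := hcg ε hε
        refine ⟨N, fun m hm n hn => ?_⟩
        have := hN m hm n hn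
        rw [dist_eq_norm] at this ⊢
        refine lt_of_le_of_lt ?_ this
        have hle2 : ∀ z : A.domain, ‖A z‖ ≤ ‖T z‖ := by
          intro z
          have h2 : ‖A z‖ ^ 2 ≤ ‖T z‖ ^ 2 := by
            rw [hTnorm z]; exact le_add_of_nonneg_right (by positivity)
          exact (abs_le_of_sq_le_sq' h2 (norm_nonneg _)).2
        calc ‖A (x m) - A (x n)‖ = ‖A (x m - x n)‖ := by rw [LinearPMap.map_sub]
        _ ≤ ‖T (x m - x n)‖ := hle2 _
        _ = ‖g m - g n‖ := by rw [LinearMap.map_sub, hx m, hx n]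
      obtain ⟨p, hp⟩ := cauchySeq_tendsto_of_complete hcx
      obtain ⟨q, hq⟩ := cauchySeq_tendsto_of_complete hcAx
      have hmemgraph : (p, q) ∈ (A.graph : Set (H × H)) := by
        apply (heis_isClosed hAdense hAsa).mem_of_tendsto (hp.prodMk_nhds hq)
        filter_upwards with n
        exact A.mem_graph (x n)
      obtain ⟨z, hz1, hz2⟩ := A.mem_graph_iff.mp hmemgraph
      refine ⟨z, ?_⟩
      have hTz : Filter.Tendsto (fun n => T (x n)) Filter.atTop (nhds (T z)) := by
        have heq : (fun n => T (x n)) = fun n => A (x n) + c • ((x n : H)) :=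
          funext fun n => hTapp _
        have hlim : T z = q + c • p := by rw [hTapp, hz1, hz2]
        rw [heq, hlim]
        exact hq.add (hp.const_smul c)
      have hTg : Filter.Tendsto (fun n => T (x n)) Filter.atTop (nhds y) := by
        simpa only [hx] using hgy
      exact tendsto_nhds_unique hTz hTg
    have hdense : (LinearMap.range T : Submodule ℂ H).topologicalClosure = ⊤ := by
      rw [Submodule.topologicalClosure_eq_top_iff]
      rw [Submodule.eq_bot_iff]
      intro y hy
      rw [Submodule.mem_orthogonal] at hy
      have hy' : ∀ x : A.domain, ⟪y, A x + c • (x : H)⟫ = 0 := by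
        intro x
        rw [← inner_eq_zero_symm]
        exact hy _ ⟨x, rfl⟩
      have hw : ∀ x : A.domain, ⟪(starRingEnd ℂ) (-c) • y, (x : H)⟫ = ⟪y, A x⟫ := by
        intro x
        have h0 := hy' x
        rw [inner_add_right, inner_smul_right] at h0
        rw [inner_smul_left, Complex.conj_conj]
        linear_combination -h0
      obtain ⟨hy2, hval⟩ := heis_mem_domain hAdense hAsa y _ hw
      have him := heis_inner_real hAdense hAsa ⟨y, hy2⟩
      rw [hval] at him
      have hinner : ⟪(starRingEnd ℂ) (-c) • y, ((⟨y, hy2⟩ : A.domain) : H)⟫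
          = -c * ((‖y‖ : ℂ)) ^ 2 := by
        rw [inner_smul_left, Complex.conj_conj,
          show ((⟨y, hy2⟩ : A.domain) : H) = y from rfl, inner_self_eq_norm_sq_to_K]
        rfl
      rw [hinner] at him
      have h2 : -c.im * ‖y‖ ^ 2 = 0 := by
        simp only [Complex.mul_im, Complex.neg_re, Complex.neg_im, hc, neg_zero, zero_mul,
          zero_add, ← Complex.ofReal_pow, Complex.ofReal_re, Complex.ofReal_im, mul_zero,
          add_zero] at him
        linarith [him]
      have hy0 : ‖y‖ ^ 2 = 0 := by
        rcases mul_eq_zero.mp h2 with h | h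
        · exact absurd (neg_eq_zero.mp h) hcim
        · exact h
      rw [pow_eq_zero_iff (by norm_num), norm_eq_zero] at hy0
      exact hy0
    rw [← hdense]
    exact (hclosed.submodule_topologicalClosure_eq).symm
  have hsurj : Function.Surjective T := LinearMap.range_eq_top.mp hrange
  let e := LinearEquiv.ofBijective T ⟨hinj, hsurj⟩
  let R0 : H →ₗ[ℂ] H := A.domain.subtype ∘ₗ (e.symm : H →ₗ[ℂ] A.domain)
  have hR0app : ∀ y, R0 y = ((e.symm y : A.domain) : H) := fun y => rfl
  have hR0 : ∀ y, ‖R0 y‖ ≤ 1 * ‖y‖ := by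
    intro y
    rw [one_mul, hR0app]
    calc ‖((e.symm y : A.domain) : H)‖ ≤ ‖T (e.symm y)‖ := hTle _
    _ = ‖y‖ := by rw [show T (e.symm y) = e (e.symm y) from rfl, e.apply_symm_apply]
  refine ⟨R0.mkContinuous 1 hR0, fun y => ?_, fun x => ?_⟩
  · have hmem : R0.mkContinuous 1 hR0 y ∈ A.domain := by
      rw [LinearMap.mkContinuous_apply, hR0app]
      exact (e.symm y).2
    refine ⟨hmem, ?_⟩
    have hxeq : (⟨R0.mkContinuous 1 hR0 y, hmem⟩ : A.domain) = e.symm y := by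
      apply Subtype.ext
      exact hR0app y
    rw [hxeq]
    calc A (e.symm y) + c • ((e.symm y : A.domain) : H) = T (e.symm y) := (hTapp _).symm
    _ = e (e.symm y) := rfl
    _ = y := e.apply_symm_apply y
  · rw [LinearMap.mkContinuous_apply, hR0app, ← hTapp x,
      show T x = e x from rfl, e.symm_apply_apply]

end Aux

/-- Norm of powers of a self-adjoint bounded operator. -/
theorem sa_norm_pow {H : Type*} [NormedAddCommGroup H] [InnerProductSpace ℂ H] [CompleteSpace H]
    {P : H →L[ℂ] H} (hP : IsSelfAdjoint P) {n : ℕ} (hn : 0 < n) : ‖P ^ n‖ = ‖P‖ ^ n := by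
  rcases eq_or_ne ‖P‖ 0 with h0 | h0
  · rw [norm_eq_zero] at h0
    simp [h0, zero_pow hn.ne']
  have hpos : 0 < ‖P‖ := lt_of_le_of_ne (norm_nonneg _) (Ne.symm (by rwa [ne_eq] at h0))
  apply le_antisymm (norm_pow_le' P hn)
  have hk : n ≤ 2 ^ n := Nat.le_of_lt (Nat.lt_two_pow_self (n := n))
  have h1 : ‖P ^ (2 : ℕ) ^ n‖ = ‖P‖ ^ (2 : ℕ) ^ n := by
    have h := congrArg ((↑) : NNReal → ℝ) (hP.nnnorm_pow_two_pow n)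
    simpa using h
  have hrest : (1 : ℕ) ≤ 2 ^ n - n := by
    have := Nat.lt_two_pow_self (n := n)
    omega
  have h2 : ‖P ^ (2 : ℕ) ^ n‖ ≤ ‖P ^ n‖ * ‖P‖ ^ (2 ^ n - n) := by
    have hsplit : P ^ (2 : ℕ) ^ n = P ^ n * P ^ (2 ^ n - n) := by
      rw [← pow_add]; congr 1; omega
    rw [hsplit]
    refine (norm_mul_le _ _).trans ?_
    gcongr
    exact norm_pow_le' P hrest
  have h3 : ‖P‖ ^ n * ‖P‖ ^ (2 ^ n - n) ≤ ‖P ^ n‖ * ‖P‖ ^ (2 ^ n - n) := by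
    calc ‖P‖ ^ n * ‖P‖ ^ (2 ^ n - n) = ‖P‖ ^ (2 : ℕ) ^ n := by
          rw [← pow_add]; congr 1; omega
    _ = ‖P ^ (2 : ℕ) ^ n‖ := h1.symm
    _ ≤ ‖P ^ n‖ * ‖P‖ ^ (2 ^ n - n) := h2
  exact le_of_mul_le_mul_right h3 (pow_pos hpos _)

theorem no_bounded_selfadjoint_heisenberg_on_core {H : Type*} [NormedAddCommGroup H]
    [InnerProductSpace ℂ H] [CompleteSpace H] [Nontrivial H]
    (A : H →ₗ.[ℂ] H) (hAdense : Dense (A.domain : Set H)) (hAsa : A.adjoint = A)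
    (B : H →L[ℂ] H) (hBsa : IsSelfAdjoint B) :
    ¬ ∃ (K : Submodule ℂ H) (hKA : K ≤ A.domain),
        (A.domRestrict K).closure = A ∧
        ∀ (k : H) (hk : k ∈ K), ∃ hm : B k ∈ A.domain,
          A ⟨B k, hm⟩ - B (A ⟨k, hKA hk⟩) = Complex.I • k := by
  rintro ⟨K, hKA, hcore, hrel⟩
  have hclosed := heis_isClosed hAdense hAsa
  -- Step 1: extend the commutation relation to all of `A.domain` using the core property.
  have hext : ∀ (x : H) (hx : x ∈ A.domain), ∃ h : B x ∈ A.domain,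
      A ⟨B x, h⟩ = B (A ⟨x, hx⟩) + Complex.I • x := by
    intro x hx
    set Φ : (H × H) →L[ℂ] (H × H) :=
      (B.comp (ContinuousLinearMap.fst ℂ H H)).prod
        ((B.comp (ContinuousLinearMap.snd ℂ H H)) +
          Complex.I • (ContinuousLinearMap.fst ℂ H H)) with hΦ
    have hΦapp : ∀ p : H × H, Φ p = (B p.1, B p.2 + Complex.I • p.1) := fun p => rfl
    have himg : Φ '' ((A.domRestrict K).graph : Set (H × H)) ⊆ (A.graph : Set (H × H)) := by
      rintro - ⟨p, hp, rfl⟩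
      obtain ⟨z, hz1, hz2⟩ := (A.domRestrict K).mem_graph_iff.mp hp
      have hzK : (z : H) ∈ K := z.2.1
      obtain ⟨hm, hrel'⟩ := hrel (z : H) hzK
      have hAz : (A.domRestrict K) z = A ⟨(z : H), hKA hzK⟩ := domRestrict_apply rfl
      have hrel'' : A ⟨B (z : H), hm⟩ = B (A ⟨(z : H), hKA hzK⟩) + Complex.I • (z : H) := by
        rw [← hrel']; abel
      refine A.mem_graph_iff.mpr ⟨⟨B (z : H), hm⟩, ?_, ?_⟩
      · rw [hΦapp, ← hz1]
      · rw [hΦapp, ← hz1, ← hz2, hAz]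
        exact hrel''
    have hclosable : (A.domRestrict K).IsClosable :=
      hclosed.isClosable.leIsClosable domRestrict_le
    have hgraph : closure ((A.domRestrict K).graph : Set (H × H)) = (A.graph : Set (H × H)) := by
      rw [← Submodule.topologicalClosure_coe, hclosable.graph_closure_eq_closure_graph, hcore]
    have hxg : ((x, A ⟨x, hx⟩) : H × H) ∈
        closure ((A.domRestrict K).graph : Set (H × H)) := by
      rw [hgraph]; exact A.mem_graph ⟨x, hx⟩
    have hmem : Φ (x, A ⟨x, hx⟩) ∈ (A.graph : Set (H × H)) := by
      have h2 := (image_closure_subset_closure_image Φ.continuous) ⟨_, hxg, rfl⟩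
      have h3 := closure_mono himg h2
      rwa [hclosed.closure_eq] at h3
    rw [hΦapp] at hmem
    obtain ⟨z, hz1, hz2⟩ := A.mem_graph_iff.mp hmem
    have hz1' : (z : H) = B x := hz1
    have hz2' : A z = B (A ⟨x, hx⟩) + Complex.I • x := hz2
    refine ⟨hz1' ▸ z.2, ?_⟩
    have hzz : (⟨B x, hz1' ▸ z.2⟩ : A.domain) = z := Subtype.ext hz1'.symm
    rw [hzz, hz2']
  -- Step 2: resolvents at `∓ i`.
  obtain ⟨R, hR1, hR2⟩ := heis_resolvent hAdense hAsa (c := -Complex.I)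
    (by simp) (by simp)
  obtain ⟨S, hS1, hS2⟩ := heis_resolvent hAdense hAsa (c := Complex.I)
    (by simp) (by simp)
  -- Step 3: the basic commutation with `B`.
  have hBR : ∀ y, B (R y) = R (B y) + Complex.I • R (R y) := by
    intro y
    obtain ⟨h, hy⟩ := hR1 y
    obtain ⟨hBx, hABx⟩ := hext (R y) h
    have hkey := hR2 ⟨B (R y), hBx⟩
    rw [show ((⟨B (R y), hBx⟩ : A.domain) : H) = B (R y) from rfl] at hkey
    rw [hABx] at hkey
    have harg : B (A ⟨R y, h⟩) + Complex.I • R y + (-Complex.I) • B (R y)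
        = B y + Complex.I • R y := by
      have hBy : B (A ⟨R y, h⟩) + (-Complex.I) • B (R y) = B y := by
        rw [← _root_.map_smul B, ← _root_.map_add]
        exact congrArg B hy
      rw [← hBy]; abel
    rw [harg, _root_.map_add, _root_.map_smul] at hkey
    exact hkey.symm
  -- Step 4: `S` is the adjoint of `R`.
  have hadj : S = ContinuousLinearMap.adjoint R := by
    rw [ContinuousLinearMap.eq_adjoint_iff]
    intro u y
    obtain ⟨hu, hSu⟩ := hS1 u
    obtain ⟨hv, hRy⟩ := hR1 y
    calc ⟪S u, y⟫ = ⟪S u, A ⟨R y, hv⟩ + (-Complex.I) • R y⟫ := by rw [hRy]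
    _ = ⟪(S u : H), A ⟨R y, hv⟩⟫ + (-Complex.I) * ⟪S u, R y⟫ := by
        rw [inner_add_right, inner_smul_right]
    _ = ⟪A ⟨S u, hu⟩, (R y : H)⟫ + (-Complex.I) * ⟪S u, R y⟫ := by
        rw [heis_symm hAdense hAsa ⟨S u, hu⟩ ⟨R y, hv⟩]
    _ = ⟪A ⟨S u, hu⟩ + Complex.I • (S u), (R y : H)⟫ := by
        rw [inner_add_left, inner_smul_left, Complex.conj_I]
    _ = ⟪u, R y⟫ := by rw [hSu]
  -- Step 5: `R` and `S` commute, so `R` is star-normal.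
  have hRS : ∀ y, R (S y) = S (R y) := by
    intro y
    obtain ⟨hu, hSu⟩ := hS1 y
    obtain ⟨hv, hRy⟩ := hR1 y
    have h1 : R (y - (2 * Complex.I) • S y) = S y := by
      have hkey := hR2 ⟨S y, hu⟩
      have harg : A ⟨S y, hu⟩ + (-Complex.I) • ((⟨S y, hu⟩ : A.domain) : H)
          = y - (2 * Complex.I) • S y := by
        calc A ⟨S y, hu⟩ + (-Complex.I) • ((⟨S y, hu⟩ : A.domain) : H)
            = (A ⟨S y, hu⟩ + Complex.I • S y) - (2 * Complex.I) • S y := by module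
        _ = y - (2 * Complex.I) • S y := by rw [hSu]
      rw [harg] at hkey
      exact hkey
    have h1' : R y - (2 * Complex.I) • R (S y) = S y := by
      calc R y - (2 * Complex.I) • R (S y) = R (y - (2 * Complex.I) • S y) := by
            rw [_root_.map_sub, _root_.map_smul]
      _ = S y := h1
    have h2 : S (y + (2 * Complex.I) • R y) = R y := by
      have hkey := hS2 ⟨R y, hv⟩
      have harg : A ⟨R y, hv⟩ + Complex.I • ((⟨R y, hv⟩ : A.domain) : H)
          = y + (2 * Complex.I) • R y := by
        calc A ⟨R y, hv⟩ + Complex.I • ((⟨R y, hv⟩ : A.domain) : H)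
            = (A ⟨R y, hv⟩ + (-Complex.I) • R y) + (2 * Complex.I) • R y := by module
        _ = y + (2 * Complex.I) • R y := by rw [hRy]
      rw [harg] at hkey
      exact hkey
    have h2' : S y + (2 * Complex.I) • S (R y) = R y := by
      calc S y + (2 * Complex.I) • S (R y) = S (y + (2 * Complex.I) • R y) := by
            rw [_root_.map_add, _root_.map_smul]
      _ = R y := h2
    have e1 : (2 * Complex.I) • R (S y) = R y - S y := by
      have := congrArg (fun t => R y - t) h1'
      simpa using this
    have e2 : (2 * Complex.I) • S (R y) = R y - S y := by
      have := congrArg (fun t => t - S y) h2'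
      simpa using this
    have h2I : (2 * Complex.I) ≠ 0 := by simp [Complex.I_ne_zero]
    exact smul_right_injective H h2I (e1.trans e2.symm)
  have hcommRS : Commute (star R) R := by
    rw [ContinuousLinearMap.star_eq_adjoint, ← hadj]
    ext y
    exact (hRS y).symm
  -- Step 6: norms of powers of `R`.
  have hRn : ∀ n : ℕ, 0 < n → ‖R ^ n‖ = ‖R‖ ^ n := by
    intro n hn
    have hP : IsSelfAdjoint (star R * R) := IsSelfAdjoint.star_mul_self R
    have h1 : ‖R ^ n‖ ^ 2 = ‖(star R * R) ^ n‖ := by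
      rw [hcommRS.mul_pow, ← star_pow, CStarRing.norm_star_mul_self]
      ring
    have h2 : ‖(star R * R) ^ n‖ = ‖star R * R‖ ^ n := sa_norm_pow hP hn
    have h3 : ‖star R * R‖ = ‖R‖ * ‖R‖ := CStarRing.norm_star_mul_self
    have h4 : ‖R ^ n‖ ^ 2 = (‖R‖ ^ n) ^ 2 := by rw [h1, h2, h3]; ring
    have h5 := congrArg Real.sqrt h4
    rwa [Real.sqrt_sq (norm_nonneg _), Real.sqrt_sq (pow_nonneg (norm_nonneg _) _)] at h5
  -- Step 7: iterated commutation relation.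
  have hbase : B * R = R * B + Complex.I • (R * R) := by
    ext y
    simpa only [ContinuousLinearMap.mul_apply, ContinuousLinearMap.add_apply,
      ContinuousLinearMap.smul_apply] using hBR y
  have hcommn : ∀ n : ℕ,
      B * R ^ (n + 1) = R ^ (n + 1) * B + (((n + 1 : ℕ) : ℂ) * Complex.I) • R ^ (n + 2) := by
    intro n
    induction n with
    | zero =>
      rw [pow_one, hbase, pow_two]
      norm_num
    | succ m ih =>
      calc B * R ^ (m + 1 + 1) = (B * R ^ (m + 1)) * R := by rw [mul_assoc, ← pow_succ]
      _ = (R ^ (m + 1) * B + (((m + 1 : ℕ) : ℂ) * Complex.I) • R ^ (m + 2)) * R := by rw [ih]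
      _ = R ^ (m + 1) * (B * R) + (((m + 1 : ℕ) : ℂ) * Complex.I) • R ^ (m + 3) := by
          rw [add_mul, smul_mul_assoc, mul_assoc, ← pow_succ]
      _ = R ^ (m + 1) * (R * B) + Complex.I • (R ^ (m + 1) * (R * R))
            + (((m + 1 : ℕ) : ℂ) * Complex.I) • R ^ (m + 3) := by
          rw [hbase, mul_add, mul_smul_comm]
      _ = R ^ (m + 2) * B + Complex.I • R ^ (m + 3)
            + (((m + 1 : ℕ) : ℂ) * Complex.I) • R ^ (m + 3) := by
          rw [show R ^ (m + 1) * (R * R) = R ^ (m + 3) by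
              rw [← mul_assoc, ← pow_succ, ← pow_succ],
            show R ^ (m + 1) * (R * B) = R ^ (m + 2) * B by rw [← mul_assoc, ← pow_succ]]
      _ = R ^ (m + 1 + 1) * B + (((m + 1 + 1 : ℕ) : ℂ) * Complex.I) • R ^ (m + 1 + 2) := by
          rw [add_assoc, ← add_smul]
          norm_num
          congr 2
          ring
  -- Step 8: the contradiction.
  have hRpos : 0 < ‖R‖ := by
    obtain ⟨y, hy⟩ := exists_ne (0 : H)
    have hRy : R y ≠ 0 := by
      intro h0
      apply hy
      obtain ⟨hm, heq⟩ := hR1 y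
      rw [← heq]
      have hz : (⟨R y, hm⟩ : A.domain) = 0 := Subtype.ext h0
      rw [hz, LinearPMap.map_zero, h0, smul_zero, add_zero]
    have h1 : 0 < ‖R y‖ := norm_pos_iff.mpr hRy
    have h2 : ‖R y‖ ≤ ‖R‖ * ‖y‖ := R.le_opNorm y
    nlinarith [norm_nonneg y, norm_nonneg R]
  have hbound : ∀ n : ℕ, ((n + 1 : ℕ) : ℝ) * ‖R‖ ≤ 2 * ‖B‖ := by
    intro n
    have h2 : (((n + 1 : ℕ) : ℂ) * Complex.I) • R ^ (n + 2)
        = B * R ^ (n + 1) - R ^ (n + 1) * B := by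
      rw [hcommn n]; abel
    have h3 : ‖(((n + 1 : ℕ) : ℂ) * Complex.I) • R ^ (n + 2)‖
        = ((n + 1 : ℕ) : ℝ) * ‖R‖ ^ (n + 2) := by
      rw [norm_smul, hRn (n + 2) (by omega), norm_mul, Complex.norm_I, mul_one,
        Complex.norm_natCast]
    have h4 : ‖B * R ^ (n + 1) - R ^ (n + 1) * B‖ ≤ 2 * (‖B‖ * ‖R‖ ^ (n + 1)) := by
      have hRn1 : ‖R ^ (n + 1)‖ = ‖R‖ ^ (n + 1) := hRn _ (by omega)
      calc ‖B * R ^ (n + 1) - R ^ (n + 1) * B‖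
          ≤ ‖B * R ^ (n + 1)‖ + ‖R ^ (n + 1) * B‖ := norm_sub_le _ _
      _ ≤ ‖B‖ * ‖R ^ (n + 1)‖ + ‖R ^ (n + 1)‖ * ‖B‖ := by
          gcongr <;> [exact norm_mul_le _ _; exact norm_mul_le _ _]
      _ = 2 * (‖B‖ * ‖R‖ ^ (n + 1)) := by rw [hRn1]; ring
    have h5 : ((n + 1 : ℕ) : ℝ) * ‖R‖ ^ (n + 2) ≤ 2 * (‖B‖ * ‖R‖ ^ (n + 1)) := by
      rw [← h3, h2]; exact h4
    have hp : 0 < ‖R‖ ^ (n + 1) := pow_pos hRpos _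
    have h6 : (((n + 1 : ℕ) : ℝ) * ‖R‖) * ‖R‖ ^ (n + 1) ≤ (2 * ‖B‖) * ‖R‖ ^ (n + 1) := by
      calc (((n + 1 : ℕ) : ℝ) * ‖R‖) * ‖R‖ ^ (n + 1)
          = ((n + 1 : ℕ) : ℝ) * ‖R‖ ^ (n + 2) := by ring
      _ ≤ 2 * (‖B‖ * ‖R‖ ^ (n + 1)) := h5
      _ = (2 * ‖B‖) * ‖R‖ ^ (n + 1) := by ring
    exact le_of_mul_le_mul_right h6 hp
  obtain ⟨n, hn⟩ := exists_nat_gt (2 * ‖B‖ / ‖R‖)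
  have hb := hbound n
  rw [div_lt_iff₀ hRpos] at hn
  push_cast at hb
  nlinarith [hRpos]
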